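/- Let ξ ∈ Φ with δ_L·δ_R < 1 and α(ξ) > 0. Write τ̃_R = τ_L·τ_R − δ_L − δ_R and δ̃_R = δ_L·δ_R, and define P = (−1/(τ̃_R − δ̃_R − 1))·(τ_R + δ_R + 1, −δ_R·(τ_L + δ_L + 1)) and Q = (−1/(τ̃_R − δ̃_R − 1))·(τ_L + δ_L + 1, −δ_L·(τ_R + δ_R + 1)). Then τ̃_R − δ̃_R − 1 < 0, the first coordinates satisfy P₁ < 0 < Q₁, f_ξ(P) = Q and f_ξ(Q) = P, and every complex eigenvalue of the matrix product A_L·A_R has modulus strictly less than 1; hence {P, Q} is an asymptotically stable period-two orbit of f_ξ with symbolic itinerary LR. -/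

import Mathlib

noncomputable section

/-- Parameters ξ = (τL, δL, τR, δR) of the 2D border-collision normal form. -/
structure Param where
  tL : ℝ
  dL : ℝ
  tR : ℝ
  dR : ℝ

/-- The region Φ where the BCNF has two saddle fixed points. -/
def Phi (ξ : Param) : Prop := |ξ.dL + 1| < ξ.tL ∧ ξ.tR < -|ξ.dR + 1|

/-- The 2D border-collision normal form map. -/
def fBC (ξ : Param) (p : ℝ × ℝ) : ℝ × ℝ :=
  if p.1 ≤ 0 then (ξ.tL * p.1 + p.2 + 1, -ξ.dL * p.1)
  else (ξ.tR * p.1 + p.2 + 1, -ξ.dR * p.1)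

def lamLu (ξ : Param) : ℝ := (ξ.tL + Real.sqrt (ξ.tL^2 - 4*ξ.dL)) / 2
def lamLs (ξ : Param) : ℝ := (ξ.tL - Real.sqrt (ξ.tL^2 - 4*ξ.dL)) / 2
def lamRu (ξ : Param) : ℝ := (ξ.tR - Real.sqrt (ξ.tR^2 - 4*ξ.dR)) / 2
def lamRs (ξ : Param) : ℝ := (ξ.tR + Real.sqrt (ξ.tR^2 - 4*ξ.dR)) / 2

/-- The renormalisation operator g. -/
def gmap (ξ : Param) : Param :=
  ⟨ξ.tR^2 - 2*ξ.dR, ξ.dR^2, ξ.tL*ξ.tR - ξ.dL - ξ.dR, ξ.dL*ξ.dR⟩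

def alphaF (ξ : Param) : ℝ := ξ.tL*ξ.tR + (ξ.dL - 1)*(ξ.dR - 1)

def phiPlus (ξ : Param) : ℝ :=
  ξ.dR - (ξ.tR + ξ.dL + ξ.dR - (1 + ξ.tR) * lamLu ξ) * lamLu ξ

def phiMinus (ξ : Param) : ℝ :=
  ξ.dR - (ξ.dR + ξ.tR - (1 + lamRu ξ) * lamLu ξ) * lamLu ξ

def phiMin (ξ : Param) : ℝ := min (phiPlus ξ) (phiMinus ξ)

/-- The skew tent map with parameters (a, b). -/
def stm (a b x : ℝ) : ℝ := if x ≤ 0 then a*x + 1 else b*x + 1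

/-- The set of points mapping into the right half-plane. -/
def PiSet (ξ : Param) : Set (ℝ × ℝ) := {p | 0 ≤ (fBC ξ p).1}

/-- The conjugating affine change of coordinates h_ξ. -/
def hMap (ξ : Param) (p : ℝ × ℝ) : ℝ × ℝ :=
  (p.1 / (ξ.tR + ξ.dR + 1), (ξ.dR * p.1 + ξ.tR * p.2 - ξ.dR) / (ξ.tR + ξ.dR + 1))

def Rset1 (n : ℕ) : Set Param :=
  {ξ | Phi ξ ∧ 0 < ξ.dL ∧ 0 < ξ.dR ∧ 0 < phiPlus (gmap^[n] ξ) ∧ phiPlus (gmap^[n+1] ξ) ≤ 0}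

def Rset2 (n : ℕ) : Set Param :=
  {ξ | Phi ξ ∧ ξ.dL < 0 ∧ ξ.dR < 0 ∧ 0 < phiPlus (gmap^[n] ξ) ∧
    phiPlus (gmap^[n+1] ξ) ≤ 0 ∧ alphaF ξ < 0}

def Rset3 (n : ℕ) : Set Param :=
  {ξ | Phi ξ ∧ 0 < ξ.dL ∧ ξ.dR < 0 ∧ 0 < phiMin (gmap^[n] ξ) ∧
    phiMin (gmap^[n+1] ξ) ≤ 0 ∧ alphaF ξ < 0}

def Rset4 (n : ℕ) : Set Param :=
  {ξ | Phi ξ ∧ ξ.dL < 0 ∧ 0 < ξ.dR ∧ 0 < phiMin (gmap^[n] ξ) ∧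
    phiMin (gmap^[n+1] ξ) ≤ 0 ∧ alphaF ξ < 0 ∧ alphaF (gmap ξ) < 0}

/-- Renormalisation operator for skew tent maps. -/
def g0 (p : ℝ × ℝ) : ℝ × ℝ := (p.2^2, p.1*p.2)
def phi0 (p : ℝ × ℝ) : ℝ := p.1*p.2 + p.1 - p.2
def alpha0 (p : ℝ × ℝ) : ℝ := p.1*p.2 + 1

/-- The regions R_n of skew tent map parameter space. -/
def RsetST (n : ℕ) : Set (ℝ × ℝ) :=
  {p | p.2 < -1 ∧ 0 < phi0 (g0^[n] p) ∧ phi0 (g0^[n+1] p) ≤ 0 ∧ alpha0 p < 0}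

lemma jury_real (T D r : ℝ) (h1 : 0 < 1 - T + D) (h2 : 0 < 1 + T + D) (h3 : D < 1)
    (heq : r^2 - T*r + D = 0) : r^2 < 1 := by
  nlinarith [mul_nonneg h1.le (sq_nonneg (1+r)), mul_nonneg h2.le (sq_nonneg (1-r)),
    mul_pos h1 h2, sq_nonneg (1+r), sq_nonneg (1-r)]

lemma jury (T D : ℝ) (μ : ℂ) (h1 : 0 < 1 - T + D) (h2 : 0 < 1 + T + D) (h3 : D < 1)
    (heq : μ^2 - (T:ℂ)*μ + (D:ℂ) = 0) : ‖μ‖ < 1 := by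
  set a := μ.re with ha'
  set b := μ.im with hb'
  have ha : a^2 - b^2 - T*a + D = 0 := by
    have := congrArg Complex.re heq
    simp [pow_two, Complex.mul_re, Complex.mul_im] at this
    linarith [this]
  have hb : 2*a*b - T*b = 0 := by
    have := congrArg Complex.im heq
    simp [pow_two, Complex.mul_re, Complex.mul_im] at this
    linarith [this]
  have key : a^2 + b^2 < 1 := by
    rcases eq_or_ne b 0 with h | h
    · rw [h] at ha ⊢
      have := jury_real T D a h1 h2 h3 (by nlinarith)
      nlinarith
    · have h2a : 2*a = T := by
        have : b * (2*a - T) = 0 := by ring_nf; linarith [hb]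
        rcases mul_eq_zero.mp this with h' | h'
        · exact absurd h' h
        · linarith
      nlinarith
  have habs : (‖μ‖)^2 < 1 := by
    rw [Complex.sq_norm, Complex.normSq_apply]
    nlinarith
  nlinarith [norm_nonneg μ, habs]

theorem stmt_4 (ξ : Param) (hξ : Phi ξ) (hdet : ξ.dL * ξ.dR < 1) (hα : 0 < alphaF ξ)
    (AL AR : Matrix (Fin 2) (Fin 2) ℝ)
    (hAL : AL = !![ξ.tL, 1; -ξ.dL, 0]) (hAR : AR = !![ξ.tR, 1; -ξ.dR, 0])
    (c : ℝ) (hc : c = -1 / (ξ.tL*ξ.tR - ξ.dL - ξ.dR - ξ.dL*ξ.dR - 1))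
    (P Q : ℝ × ℝ)
    (hP : P = (c * (ξ.tR + ξ.dR + 1), c * (-ξ.dR * (ξ.tL + ξ.dL + 1))))
    (hQ : Q = (c * (ξ.tL + ξ.dL + 1), c * (-ξ.dL * (ξ.tR + ξ.dR + 1)))) :
    ξ.tL*ξ.tR - ξ.dL - ξ.dR - ξ.dL*ξ.dR - 1 < 0 ∧
    P.1 < 0 ∧ 0 < Q.1 ∧ fBC ξ P = Q ∧ fBC ξ Q = P ∧
    ∀ μ : ℂ,
      Module.End.HasEigenvalue
        (Matrix.toLin' ((AL * AR).map (fun a => (a : ℂ))) : Module.End ℂ (Fin 2 → ℂ)) μ →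
      ‖μ‖ < 1 := by
  obtain ⟨tL, dL, tR, dR⟩ := ξ
  obtain ⟨hL, hR⟩ := hξ
  simp only at hL hR hdet hα hAL hAR hc hP hQ ⊢
  unfold alphaF at hα
  simp only at hα
  -- basic inequalities
  have habsL1 : -(dL+1) ≤ |dL+1| := neg_le_abs _
  have habsL2 : dL+1 ≤ |dL+1| := le_abs_self _
  have habsR1 : -(dR+1) ≤ |dR+1| := neg_le_abs _
  have habsR2 : dR+1 ≤ |dR+1| := le_abs_self _
  have htLpos : 0 < tL := lt_of_le_of_lt (abs_nonneg _) hL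
  have htRneg : tR < 0 := lt_of_lt_of_le hR (by linarith [abs_nonneg (dR+1)])
  have hprod : |dL+1| * |dR+1| < tL * (-tR) :=
    mul_lt_mul'' hL (by linarith) (abs_nonneg _) (abs_nonneg _)
  have hprod2 : -((dL+1)*(dR+1)) ≤ |dL+1| * |dR+1| := by
    rw [← abs_mul]; exact neg_le_abs _
  have hD : tL*tR - dL - dR - dL*dR - 1 < 0 := by nlinarith
  set D := tL*tR - dL - dR - dL*dR - 1 with hDdef
  have hDne : D ≠ 0 := ne_of_lt hD
  have hcpos : 0 < c := by
    rw [hc]; exact div_pos_of_neg_of_neg (by norm_num) hD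
  have hcD : c * D = -1 := by
    rw [hc]; field_simp
  have hP1 : P.1 < 0 := by
    rw [hP]
    exact mul_neg_of_pos_of_neg hcpos (by linarith)
  have hQ1 : 0 < Q.1 := by
    rw [hQ]
    exact mul_pos hcpos (by linarith)
  refine ⟨hD, hP1, hQ1, ?_, ?_, ?_⟩
  · -- fBC P = Q
    rw [hP, hQ]
    unfold fBC
    rw [if_pos (by rw [hP] at hP1; exact le_of_lt hP1), Prod.ext_iff]
    constructor
    · show tL * (c*(tR+dR+1)) + c*(-dR*(tL+dL+1)) + 1 = c*(tL+dL+1)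
      linear_combination hcD
    · show -dL * (c*(tR+dR+1)) = c*(-dL*(tR+dR+1))
      ring
  · -- fBC Q = P
    rw [hP, hQ]
    unfold fBC
    rw [if_neg (by rw [hQ] at hQ1; simp only; push_neg; exact hQ1), Prod.ext_iff]
    constructor
    · show tR * (c*(tL+dL+1)) + c*(-dL*(tR+dR+1)) + 1 = c*(tR+dR+1)
      linear_combination hcD
    · show -dR * (c*(tL+dL+1)) = c*(-dR*(tL+dL+1))
      ring
  · -- eigenvalues
    intro μ hμ
    have hM : (AL * AR).map (fun a => (a : ℂ)) =
        !![((tL*tR - dR : ℝ) : ℂ), ((tL : ℝ) : ℂ); ((-(dL*tR) : ℝ) : ℂ), ((-dL : ℝ) : ℂ)] := by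
      subst hAL hAR
      ext i j
      fin_cases i <;> fin_cases j <;>
        simp [Matrix.mul_apply, Fin.sum_univ_two, Matrix.map_apply] <;> push_cast <;> ring
    rw [hM] at hμ
    obtain ⟨v, hv0, hvne⟩ := hμ.exists_hasEigenvector
    have hv : (!![((tL*tR - dR : ℝ) : ℂ), ((tL : ℝ) : ℂ); ((-(dL*tR) : ℝ) : ℂ), ((-dL : ℝ) : ℂ)]).mulVec v = μ • v := by
      have := Module.End.mem_eigenspace_iff.mp hv0
      rwa [Matrix.toLin'_apply] at this
    have e0 := congrFun hv 0
    have e1 := congrFun hv 1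
    simp [Matrix.mulVec, dotProduct, Fin.sum_univ_two] at e0 e1
    push_cast at e0 e1
    have hquad2 : μ^2 - ((tL : ℂ)*(tR : ℂ) - (dL : ℂ) - (dR : ℂ)) * μ + (dL : ℂ)*(dR : ℂ) = 0 := by
      rcases eq_or_ne (v 0) 0 with h0 | h0
      · exfalso
        have hBne : ((tL : ℝ) : ℂ) ≠ 0 := by
          simp only [Ne, Complex.ofReal_eq_zero]; exact ne_of_gt htLpos
        have hv1 : v 1 = 0 := by
          have : ((tL : ℝ) : ℂ) * v 1 = 0 := by linear_combination e0 + (μ - ((tL : ℂ)*(tR : ℂ) - (dR : ℂ))) * h0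
          exact (mul_eq_zero.mp this).resolve_left hBne
        apply hvne
        funext i
        fin_cases i
        · exact h0
        · exact hv1
      · have k0 : (μ - ((tL : ℂ)*(tR : ℂ) - (dR : ℂ))) * v 0 = (tL : ℂ) * v 1 := by
          linear_combination -e0
        have k1 : (μ + (dL : ℂ)) * v 1 = -((dL : ℂ)*(tR : ℂ)) * v 0 := by
          linear_combination -e1
        have key : (μ^2 - ((tL : ℂ)*(tR : ℂ) - (dL : ℂ) - (dR : ℂ)) * μ + (dL : ℂ)*(dR : ℂ)) * v 0 = 0 := by
          linear_combination (μ + (dL : ℂ)) * k0 + (tL : ℂ) * k1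
        exact (mul_eq_zero.mp key).resolve_right h0
    exact jury (tL*tR - dL - dR) (dL*dR) μ (by linarith) (by nlinarith) hdet
      (by push_cast; linear_combination hquad2)
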